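/- Let Γ be a finite Büchi game and v₀ a position. If a strategy S of Player 0 from v₀ is strictly absorption-dominant (no other strategy S' from v₀ satisfies S' ⪰ S), then S is positional. -/

import Mathlib

/-- A Büchi game: positions `V` partitioned into Player 0's positions `V0` and
Player 1's positions `V1`, edge relation `E` with every position having a
successor, and target set `F`. -/
structure BuchiGame (V : Type*) where
  V0 : Set V
  V1 : Set V
  E : V → V → Prop
  F : Set V
  cover : ∀ v, v ∈ V0 ∨ v ∈ V1
  disjoint : ∀ v, ¬(v ∈ V0 ∧ v ∈ V1)
  nonempty_succ : ∀ v, ∃ w, E v w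

/-- A strategy of Player 0 from `v0`, represented as a subtree of the tree
unraveling of the game: a set of finite paths from `v0` which is prefix-closed,
has a unique chosen successor at nodes ending in Player 0 positions, and all
successors at nodes ending in Player 1 positions. -/
structure BuchiStrategy {V : Type*} (G : BuchiGame V) (v0 : V) where
  tree : Set (List V)
  root_mem : [v0] ∈ tree
  isPath : ∀ ρ ∈ tree, ρ.head? = some v0 ∧ List.Chain' G.E ρ
  prefix_closed : ∀ (ρ : List V) (v : V), ρ ≠ [] → ρ ++ [v] ∈ tree → ρ ∈ tree
  choice0 : ∀ (ρ : List V) (v : V), ρ ++ [v] ∈ tree → v ∈ G.V0 →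
    ∃! w : V, ρ ++ [v, w] ∈ tree
  choice1 : ∀ (ρ : List V) (v : V), ρ ++ [v] ∈ tree → v ∈ G.V1 →
    ∀ w : V, G.E v w → ρ ++ [v, w] ∈ tree

namespace BuchiStrategy

variable {V : Type*} {G : BuchiGame V} {v0 : V}

/-- The number of occurrences (in `ℕ∞`) of the edge `e` in the strategy tree. -/
noncomputable def edgeCount (S : BuchiStrategy G v0) (e : V × V) : ℕ∞ :=
  {ρ : List V | ρ ++ [e.1, e.2] ∈ S.tree}.encard

/-- `S₁` absorbs `S₂`: every edge occurs in `S₁` at most as often as in `S₂`. -/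
def Absorbs (S₁ S₂ : BuchiStrategy G v0) : Prop :=
  ∀ e : V × V, S₁.edgeCount e ≤ S₂.edgeCount e

/-- `S₁` strictly absorbs `S₂`. -/
def StrictlyAbsorbs (S₁ S₂ : BuchiStrategy G v0) : Prop :=
  Absorbs S₁ S₂ ∧ ∃ e : V × V, S₁.edgeCount e < S₂.edgeCount e

/-- A strategy is absorption-dominant from `v0` if no strategy strictly absorbs it. -/
def AbsorptionDominant (S : BuchiStrategy G v0) : Prop :=
  ∀ S' : BuchiStrategy G v0, ¬ StrictlyAbsorbs S' S

/-- A strategy is positional if all occurrences of any Player 0 position have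
the same chosen successor. -/
def Positional (S : BuchiStrategy G v0) : Prop :=
  ∀ v ∈ G.V0, ∀ (ρ ρ' : List V) (w w' : V),
    ρ ++ [v, w] ∈ S.tree → ρ' ++ [v, w'] ∈ S.tree → w = w'

/-- An infinite play consistent with the strategy: all finite prefixes lie in
the strategy tree. -/
def ConsistentPlay (S : BuchiStrategy G v0) (f : ℕ → V) : Prop :=
  ∀ n : ℕ, (List.range (n + 1)).map f ∈ S.tree

/-- A strategy is winning if every consistent play visits `F` infinitely often. -/
def Winning (S : BuchiStrategy G v0) : Prop :=
  ∀ f : ℕ → V, S.ConsistentPlay f → ∀ n : ℕ, ∃ m : ℕ, n ≤ m ∧ f m ∈ G.F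

end BuchiStrategy

namespace BuchiAux
variable {V : Type*}

open Classical in
/-- Rewrites paths: subtree below `p` becomes a copy of the subtree below `q` and
conversely (redirect/swap map). -/
noncomputable def gMap (p q σ : List V) : List V :=
  if p <+: σ then q ++ σ.drop p.length
  else if q <+: σ then p ++ σ.drop q.length
  else σ

lemma gMap_of_prefix {p σ : List V} (q : List V) (h : p <+: σ) :
    gMap p q σ = q ++ σ.drop p.length := by simp [gMap, h]

lemma gMap_of_prefix' {p q σ : List V} (h1 : ¬ p <+: σ) (h2 : q <+: σ) :
    gMap p q σ = p ++ σ.drop q.length := by simp [gMap, h1, h2]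

lemma gMap_of_not {p q σ : List V} (h1 : ¬ p <+: σ) (h2 : ¬ q <+: σ) :
    gMap p q σ = σ := by simp [gMap, h1, h2]

lemma gMap_p (p q : List V) : gMap p q p = q := by
  rw [gMap_of_prefix q (List.prefix_refl p)]; simp

lemma gMap_q {p q : List V} (h : ¬ p <+: q) : gMap p q q = p := by
  rw [gMap_of_prefix' h (List.prefix_refl q)]; simp

lemma eq_snoc_of_prefix_snoc {p σ : List V} {x : V}
    (h : p <+: σ ++ [x]) (h2 : ¬ p <+: σ) : p = σ ++ [x] := by
  rcases Nat.lt_or_ge p.length (σ ++ [x]).length with hl | hl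
  · exact absurd (List.prefix_of_prefix_length_le h (List.prefix_append σ [x])
      (by simpa using Nat.lt_succ_iff.mp (by simpa using hl))) h2
  · exact h.eq_of_length (le_antisymm h.length_le hl)

lemma snoc_eq_iff {σ σ' : List V} {x x' : V} :
    σ ++ [x] = σ' ++ [x'] ↔ σ = σ' ∧ x = x' := by
  constructor
  · intro h
    have hx : x = x' := by
      have := congrArg List.getLast? h
      simpa [List.getLast?_concat] using this
    subst hx
    exact ⟨by simpa using congrArg List.dropLast h, rfl⟩
  · rintro ⟨rfl, rfl⟩; rfl

lemma drop_snoc_of_prefix {p σ : List V} (x : V) (h : p <+: σ) :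
    (σ ++ [x]).drop p.length = σ.drop p.length ++ [x] := by
  obtain ⟨t, rfl⟩ := h
  simp [List.drop_left, List.append_assoc, List.drop_left]

/-- Key commutation: `gMap` commutes with snoc away from the boundary nodes. -/
lemma gMap_snoc {p q σ : List V} {x : V}
    (h1 : σ ++ [x] ≠ p) (h2 : σ ++ [x] = q → p <+: σ) :
    gMap p q (σ ++ [x]) = gMap p q σ ++ [x] := by
  by_cases hp1 : p <+: σ
  · rw [gMap_of_prefix q (hp1.trans (List.prefix_append σ [x])), gMap_of_prefix q hp1,
      drop_snoc_of_prefix x hp1, List.append_assoc]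
  · have hpx : ¬ p <+: σ ++ [x] := fun h => h1 (eq_snoc_of_prefix_snoc h hp1).symm
    by_cases hq1 : q <+: σ
    · rw [gMap_of_prefix' hpx (hq1.trans (List.prefix_append σ [x])), gMap_of_prefix' hp1 hq1,
        drop_snoc_of_prefix x hq1, List.append_assoc]
    · have hqx : ¬ q <+: σ ++ [x] := fun h => hp1 (h2 (eq_snoc_of_prefix_snoc h hq1).symm)
      rw [gMap_of_not hpx hqx, gMap_of_not hp1 hq1]

lemma gMap_ne_nil {p q σ : List V} (hp : p ≠ []) (hq : q ≠ []) (hσ : σ ≠ []) :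
    gMap p q σ ≠ [] := by
  unfold gMap
  split
  · simp [hq]
  · split
    · simp [hp]
    · exact hσ

lemma gMap_getLast? {p q : List V} {v : V} (hlp : p.getLast? = some v)
    (hlq : q.getLast? = some v) (σ : List V) :
    (gMap p q σ).getLast? = σ.getLast? := by
  unfold gMap
  split
  · rename_i h
    obtain ⟨t, rfl⟩ := h
    rw [List.drop_left, List.getLast?_append, List.getLast?_append]
    cases t.getLast? <;> simp [hlp, hlq]
  · split
    · rename_i _ h
      obtain ⟨t, rfl⟩ := h
      rw [List.drop_left, List.getLast?_append, List.getLast?_append]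
      cases t.getLast? <;> simp [hlp, hlq]
    · rfl

lemma gMap_head? {p q : List V} {v0 : V} (hhp : p.head? = some v0)
    (hhq : q.head? = some v0) (σ : List V) :
    (gMap p q σ).head? = σ.head? := by
  unfold gMap
  split
  · rename_i h
    obtain ⟨t, rfl⟩ := h
    rw [List.drop_left, List.head?_append, List.head?_append, hhp, hhq]
  · split
    · rename_i _ h
      obtain ⟨t, rfl⟩ := h
      rw [List.drop_left, List.head?_append, List.head?_append, hhp, hhq]
    · rfl

lemma prefix_total {p q σ : List V} (h1 : p <+: σ) (h2 : q <+: σ) :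
    p <+: q ∨ q <+: p := by
  rcases le_total p.length q.length with h | h
  · exact Or.inl (List.prefix_of_prefix_length_le h1 h2 h)
  · exact Or.inr (List.prefix_of_prefix_length_le h2 h1 h)

lemma gMap_injective {p q : List V} {v : V} (hlp : p.getLast? = some v)
    (hlq : q.getLast? = some v) (hpq : p ≠ q) (hqp : ¬ q <+: p) :
    Function.Injective (gMap p q) := by
  have key : ∀ σ₁ σ₂ : List V, gMap p q σ₁ = gMap p q σ₂ →
      (p <+: σ₁) → σ₁ = σ₂ := by
    intro σ₁ σ₂ h h1
    rw [gMap_of_prefix q h1] at h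
    by_cases h2 : p <+: σ₂
    · rw [gMap_of_prefix q h2] at h
      have := List.append_cancel_left h
      obtain ⟨t1, rfl⟩ := h1
      obtain ⟨t2, rfl⟩ := h2
      rw [List.drop_left, List.drop_left] at this
      rw [this]
    · by_cases h3 : q <+: σ₂
      · rw [gMap_of_prefix' h2 h3] at h
        have hpq' : ¬ p <+: q := fun hc => h2 (hc.trans h3)
        have e1 : p <+: q ++ σ₁.drop p.length := ⟨_, h.symm⟩
        have e2 : q <+: q ++ σ₁.drop p.length := ⟨_, rfl⟩
        rcases prefix_total e1 e2 with hc | hc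
        · exact absurd hc hpq'
        · exact absurd hc hqp
      · rw [gMap_of_not h2 h3] at h
        exact absurd ⟨_, h⟩ h3
  intro σ₁ σ₂ h
  by_cases h1 : p <+: σ₁
  · exact key σ₁ σ₂ h h1
  · by_cases h2 : p <+: σ₂
    · exact (key σ₂ σ₁ h.symm h2).symm
    · by_cases h3 : q <+: σ₁
      · rw [gMap_of_prefix' h1 h3] at h
        by_cases h4 : q <+: σ₂
        · rw [gMap_of_prefix' h2 h4] at h
          have := List.append_cancel_left h
          obtain ⟨t1, rfl⟩ := h3
          obtain ⟨t2, rfl⟩ := h4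
          rw [List.drop_left, List.drop_left] at this
          rw [this]
        · rw [gMap_of_not h2 h4] at h
          exact absurd ⟨_, h⟩ h2
      · rw [gMap_of_not h1 h3] at h
        by_cases h4 : q <+: σ₂
        · rw [gMap_of_prefix' h2 h4] at h
          exact absurd ⟨_, h.symm⟩ h1
        · rw [gMap_of_not h2 h4] at h
          exact h

lemma eq_q_of_gMap_eq_p {p q σ : List V} (hqp : ¬ q <+: p)
    (h : gMap p q σ = p) : σ = q := by
  unfold gMap at h
  split at h
  · exact absurd ⟨_, h⟩ hqp
  · split at h
    · rename_i h1 h2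
      have hlen : q.length = σ.length := by
        have hc := congrArg List.length h
        have := h2.length_le
        simp at hc
        omega
      exact (h2.eq_of_length hlen).symm
    · rename_i h1 h2
      exact absurd (h ▸ List.prefix_refl σ) h1

lemma eq_p_or_q_of_gMap_eq_q {p q σ : List V} (hpq : p ≠ q)
    (h : gMap p q σ = q) : σ = p ∨ σ = q := by
  unfold gMap at h
  split at h
  · rename_i h1
    left
    have hlen : p.length = σ.length := by
      have hc := congrArg List.length h
      have := h1.length_le
      simp at hc
      omega
    exact (h1.eq_of_length hlen).symm
  · split at h
    · rename_i h1 h2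
      exfalso
      exact h1 (List.IsPrefix.trans ⟨_, h⟩ h2)
    · exact Or.inr h

open BuchiStrategy

variable {V : Type*}

lemma exists_snoc_of_getLast? {l : List V} {x : V} (h : l.getLast? = some x) :
    ∃ μ, l = μ ++ [x] := by
  rcases l.eq_nil_or_concat with rfl | ⟨μ, a, rfl⟩
  · simp at h
  · simp only [List.concat_eq_append] at h ⊢
    rw [List.getLast?_concat] at h
    exact ⟨μ, by rw [Option.some.inj h]⟩

lemma snoc_last_eq {σ q : List V} {y v : V} (hlq : q.getLast? = some v)
    (hc : σ ++ [y] = q) : y = v := by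
  have := congrArg List.getLast? hc
  rw [List.getLast?_concat, hlq] at this
  exact Option.some.inj this

lemma snoc2 (ρ : List V) (v w : V) : ρ ++ [v, w] = (ρ ++ [v]) ++ [w] := by simp

variable {G : BuchiGame V} {v0 : V}

noncomputable def graft (S : BuchiStrategy G v0) (p q : List V) (v : V)
    (hp : p ∈ S.tree) (hq : q ∈ S.tree)
    (hlp : p.getLast? = some v) (hlq : q.getLast? = some v)
    (hpq : p ≠ q) (hqp : ¬ q <+: p) : BuchiStrategy G v0 where
  tree := {σ | gMap p q σ ∈ S.tree}
  root_mem := by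
    have hpn : p ≠ [] := fun h => by simp [h] at hlp
    have hqn : q ≠ [] := fun h => by simp [h] at hlq
    show gMap p q [v0] ∈ S.tree
    by_cases h1 : p <+: [v0]
    · have hpe : p = [v0] := by
        have := eq_snoc_of_prefix_snoc (σ := []) (by simpa using h1)
          (by simpa [List.prefix_nil] using hpn)
        simpa using this
      rw [← hpe, gMap_p]; exact hq
    · by_cases h2 : q <+: [v0]
      · have hqe : q = [v0] := by
          have := eq_snoc_of_prefix_snoc (σ := []) (by simpa using h2)
            (by simpa [List.prefix_nil] using hqn)
          simpa using this
        rw [← hqe, gMap_q (by rwa [hqe])]; exact hp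
      · rw [gMap_of_not h1 h2]; exact S.root_mem
  isPath := by
    intro σ hσ
    have hσ' : gMap p q σ ∈ S.tree := hσ
    obtain ⟨hhead, hchain⟩ := S.isPath _ hσ'
    constructor
    · rwa [gMap_head? (S.isPath p hp).1 (S.isPath q hq).1] at hhead
    · by_cases h1 : p <+: σ
      · obtain ⟨τ, rfl⟩ := h1
        rw [gMap_of_prefix q ⟨τ, rfl⟩, List.drop_left, List.Chain', List.isChain_append] at hchain
        obtain ⟨cq, cτ, hlink⟩ := hchain
        rw [List.Chain', List.isChain_append]
        refine ⟨(S.isPath p hp).2, cτ, ?_⟩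
        intro x hx y hy
        have hx' : x = v := by
          rw [Option.mem_def, hlp] at hx
          exact (Option.some.inj hx).symm
        subst hx'
        exact hlink x (by rw [Option.mem_def, hlq]) y hy
      · by_cases h2 : q <+: σ
        · obtain ⟨τ, rfl⟩ := h2
          rw [gMap_of_prefix' h1 ⟨τ, rfl⟩, List.drop_left, List.Chain', List.isChain_append] at hchain
          obtain ⟨cp, cτ, hlink⟩ := hchain
          rw [List.Chain', List.isChain_append]
          refine ⟨(S.isPath q hq).2, cτ, ?_⟩
          intro x hx y hy
          have hx' : x = v := by
            rw [Option.mem_def, hlq] at hx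
            exact (Option.some.inj hx).symm
          subst hx'
          exact hlink x (by rw [Option.mem_def, hlp]) y hy
        · rwa [gMap_of_not h1 h2] at hchain
  prefix_closed := by
    have hpn : p ≠ [] := fun h => by simp [h] at hlp
    have hqn : q ≠ [] := fun h => by simp [h] at hlq
    intro σ x hσne h
    have h' : gMap p q (σ ++ [x]) ∈ S.tree := h
    show gMap p q σ ∈ S.tree
    by_cases hA : σ ++ [x] = p
    · have hgσ : gMap p q σ = σ := by
        apply gMap_of_not
        · intro hc
          have := hc.length_le
          rw [← hA] at this; simp at this
        · intro hc
          exact hqp (hc.trans (by rw [← hA]; exact List.prefix_append σ [x]))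
      rw [hgσ]
      exact S.prefix_closed σ x hσne (by rw [hA]; exact hp)
    · by_cases hB : σ ++ [x] = q
      · by_cases hp1 : p <+: σ
        · rw [gMap_snoc hA (fun _ => hp1)] at h'
          exact S.prefix_closed _ x (gMap_ne_nil hpn hqn hσne) h'
        · have hgσ : gMap p q σ = σ := by
            apply gMap_of_not hp1
            intro hc
            have := hc.length_le
            rw [← hB] at this; simp at this
          rw [hgσ]
          exact S.prefix_closed σ x hσne (by rw [hB]; exact hq)
      · rw [gMap_snoc hA (fun hc => absurd hc hB)] at h'
        exact S.prefix_closed _ x (gMap_ne_nil hpn hqn hσne) h'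
  choice0 := by
    intro σ x hmem hx
    have hmem' : gMap p q (σ ++ [x]) ∈ S.tree := hmem
    by_cases hA : (σ ++ [x]) ++ [v] = p
    · have hgν : gMap p q (σ ++ [x]) = σ ++ [x] := by
        apply gMap_of_not
        · intro hc
          have := hc.length_le
          rw [← hA] at this; simp at this
        · intro hc
          exact hqp (hc.trans (by rw [← hA]; exact List.prefix_append _ [v]))
      rw [hgν] at hmem'
      obtain ⟨y₀, hy₀, huniq⟩ := S.choice0 σ x hmem' hx
      refine ⟨v, ?_, ?_⟩
      · show gMap p q (σ ++ [x, v]) ∈ S.tree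
        rw [snoc2, hA, gMap_p]; exact hq
      · intro y hy
        by_cases hyv : y = v
        · exact hyv
        exfalso
        have hy' : gMap p q (σ ++ [x, y]) ∈ S.tree := hy
        have hne1 : (σ ++ [x]) ++ [y] ≠ p := by
          intro hc; rw [← hA] at hc
          exact hyv (snoc_eq_iff.mp hc).2
        have hne2 : (σ ++ [x]) ++ [y] ≠ q := fun hc => hyv (snoc_last_eq hlq hc)
        rw [snoc2, gMap_snoc hne1 (fun hc => absurd hc hne2), hgν] at hy'
        have h1 := huniq y (by show σ ++ [x, y] ∈ S.tree; rw [snoc2]; exact hy')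
        have h2 := huniq v (by show σ ++ [x, v] ∈ S.tree; rw [snoc2, hA]; exact hp)
        exact hyv (h1.trans h2.symm)
    · by_cases hB : ((σ ++ [x]) ++ [v] = q) ∧ ¬ p <+: σ ++ [x]
      · obtain ⟨hB1, hp1⟩ := hB
        have hgν : gMap p q (σ ++ [x]) = σ ++ [x] := by
          apply gMap_of_not hp1
          intro hc
          have := hc.length_le
          rw [← hB1] at this; simp at this
        rw [hgν] at hmem'
        obtain ⟨y₀, hy₀, huniq⟩ := S.choice0 σ x hmem' hx
        have hnpq : ¬ p <+: q := by
          intro hc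
          rw [← hB1] at hc
          rcases eq_or_ne p ((σ ++ [x]) ++ [v]) with he | hne
          · exact hA he.symm
          · exact hp1 (by
              by_contra hp2
              exact hne (eq_snoc_of_prefix_snoc hc hp2))
        refine ⟨v, ?_, ?_⟩
        · show gMap p q (σ ++ [x, v]) ∈ S.tree
          rw [snoc2, hB1, gMap_q hnpq]; exact hp
        · intro y hy
          by_cases hyv : y = v
          · exact hyv
          exfalso
          have hy' : gMap p q (σ ++ [x, y]) ∈ S.tree := hy
          have hne1 : (σ ++ [x]) ++ [y] ≠ p := fun hc => hyv (snoc_last_eq hlp hc)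
          have hne2 : (σ ++ [x]) ++ [y] ≠ q := by
            intro hc; rw [← hB1] at hc
            exact hyv (snoc_eq_iff.mp hc).2
          rw [snoc2, gMap_snoc hne1 (fun hc => absurd hc hne2), hgν] at hy'
          have h1 := huniq y (by show σ ++ [x, y] ∈ S.tree; rw [snoc2]; exact hy')
          have h2 := huniq v (by show σ ++ [x, v] ∈ S.tree; rw [snoc2, hB1]; exact hq)
          exact hyv (h1.trans h2.symm)
      · have hcomm : ∀ y : V, gMap p q ((σ ++ [x]) ++ [y]) = gMap p q (σ ++ [x]) ++ [y] := by
          intro y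
          apply gMap_snoc
          · intro hc
            have hyv : y = v := snoc_last_eq hlp hc
            exact hA (hyv ▸ hc)
          · intro hc
            have hyv : y = v := snoc_last_eq hlq hc
            by_contra hp2
            exact hB ⟨hyv ▸ hc, hp2⟩
        obtain ⟨μ, hμ⟩ := exists_snoc_of_getLast? (l := gMap p q (σ ++ [x])) (x := x)
          (by rw [gMap_getLast? hlp hlq]; exact List.getLast?_concat)
        rw [hμ] at hmem'
        obtain ⟨y₀, hy₀, huniq⟩ := S.choice0 μ x hmem' hx
        refine ⟨y₀, ?_, ?_⟩
        · show gMap p q (σ ++ [x, y₀]) ∈ S.tree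
          rw [snoc2, hcomm, hμ, ← snoc2]
          exact hy₀
        · intro y hy
          apply huniq
          have hy' : gMap p q (σ ++ [x, y]) ∈ S.tree := hy
          rw [snoc2, hcomm, hμ, ← snoc2] at hy'
          exact hy'
  choice1 := by
    intro σ x hmem hx y hE
    have hmem' : gMap p q (σ ++ [x]) ∈ S.tree := hmem
    show gMap p q (σ ++ [x, y]) ∈ S.tree
    by_cases h1 : (σ ++ [x]) ++ [y] = p
    · rw [snoc2, h1, gMap_p]; exact hq
    · by_cases h2 : ((σ ++ [x]) ++ [y] = q) ∧ ¬ p <+: σ ++ [x]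
      · obtain ⟨h2q, hp1⟩ := h2
        have hnpq : ¬ p <+: q := by
          intro hc
          rw [← h2q] at hc
          rcases eq_or_ne p ((σ ++ [x]) ++ [y]) with he | hne
          · exact h1 he.symm
          · exact hp1 (by
              by_contra hp2
              exact hne (eq_snoc_of_prefix_snoc hc hp2))
        rw [snoc2, h2q, gMap_q hnpq]; exact hp
      · have hcomm : gMap p q ((σ ++ [x]) ++ [y]) = gMap p q (σ ++ [x]) ++ [y] := by
          apply gMap_snoc h1
          intro hc
          by_contra hp2
          exact h2 ⟨hc, hp2⟩
        obtain ⟨μ, hμ⟩ := exists_snoc_of_getLast? (l := gMap p q (σ ++ [x])) (x := x)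
          (by rw [gMap_getLast? hlp hlq]; exact List.getLast?_concat)
        rw [hμ] at hmem'
        rw [snoc2, hcomm, hμ, ← snoc2]
        exact S.choice1 μ x hmem' hx y hE


lemma snoc2_cancel {σ₁ σ₂ : List V} {a b : V}
    (h : σ₁ ++ [a, b] = σ₂ ++ [a, b]) : σ₁ = σ₂ := by
  rw [snoc2, snoc2] at h
  exact (snoc_eq_iff.mp (snoc_eq_iff.mp h).1).1

/-- Away from the nodes `p`, `q`, `gMap` preserves the final edge. -/
lemma gMap_snoc2 {p q : List V} {v : V} (hlp : p.getLast? = some v)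
    (hlq : q.getLast? = some v) (hpq : p ≠ q) (σ : List V) (a b : V)
    (h1 : σ ++ [a, b] ≠ p) (h2 : σ ++ [a, b] ≠ q) :
    ∃ σ', gMap p q (σ ++ [a, b]) = σ' ++ [a, b] := by
  rw [snoc2] at h1 h2 ⊢
  rw [gMap_snoc h1 (fun hc => absurd hc h2)]
  by_cases hc : σ ++ [a] = p
  · obtain ⟨μ, hμ⟩ := exists_snoc_of_getLast? hlq
    have hav : a = v := snoc_last_eq hlp hc
    refine ⟨μ, ?_⟩
    rw [hc, gMap_p, hμ, hav]
    simp
  · by_cases hc2 : σ ++ [a] = q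
    · by_cases hp1 : p <+: σ
      · rw [gMap_snoc hc (fun _ => hp1)]
        exact ⟨gMap p q σ, by simp⟩
      · have hnpq : ¬ p <+: q := by
          intro hcc
          rw [← hc2] at hcc
          exact hpq ((eq_snoc_of_prefix_snoc hcc hp1).trans hc2)
        obtain ⟨μ, hμ⟩ := exists_snoc_of_getLast? hlp
        have hav : a = v := snoc_last_eq hlq hc2
        refine ⟨μ, ?_⟩
        rw [hc2, gMap_q hnpq, hμ, hav]
        simp
    · rw [gMap_snoc hc (fun hcc => absurd hcc hc2)]
      exact ⟨gMap p q σ, by simp⟩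


lemma graft_absorbs (S : BuchiStrategy G v0) (p q : List V) (v : V)
    (hp : p ∈ S.tree) (hq : q ∈ S.tree)
    (hlp : p.getLast? = some v) (hlq : q.getLast? = some v)
    (hpq : p ≠ q) (hqp : ¬ q <+: p) :
    (graft S p q v hp hq hlp hlq hpq hqp).Absorbs S := by
  intro e
  obtain ⟨a, b⟩ := e
  show ({ρ : List V | ρ ++ [a, b] ∈ (graft S p q v hp hq hlp hlq hpq hqp).tree}).encard ≤
    ({ρ : List V | ρ ++ [a, b] ∈ S.tree}).encard
  classical
  set Φ : List V → List V := fun σ =>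
    if σ ++ [a, b] = p ∨ σ ++ [a, b] = q then σ
    else (gMap p q (σ ++ [a, b])).dropLast.dropLast with hΦ
  have hkey : ∀ σ : List V, ¬(σ ++ [a, b] = p ∨ σ ++ [a, b] = q) →
      Φ σ ++ [a, b] = gMap p q (σ ++ [a, b]) := by
    intro σ hσ
    obtain ⟨hσ1, hσ2⟩ := not_or.mp hσ
    obtain ⟨σ', hσ'⟩ := gMap_snoc2 hlp hlq hpq σ a b hσ1 hσ2
    rw [hΦ]
    simp only [if_neg hσ]
    rw [hσ', snoc2 σ' a b, List.dropLast_concat, List.dropLast_concat, ← snoc2]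
  apply Set.encard_le_encard_of_injOn (f := Φ)
  · intro σ hσ
    have hσ' : gMap p q (σ ++ [a, b]) ∈ S.tree := hσ
    show Φ σ ++ [a, b] ∈ S.tree
    by_cases hif : σ ++ [a, b] = p ∨ σ ++ [a, b] = q
    · rw [hΦ]
      simp only [if_pos hif]
      rcases hif with h | h
      · rw [h]; exact hp
      · rw [h]; exact hq
    · rw [hkey σ hif]
      exact hσ'
  · intro σ₁ hσ₁ σ₂ hσ₂ heq
    by_cases c₁ : σ₁ ++ [a, b] = p ∨ σ₁ ++ [a, b] = q
    · by_cases c₂ : σ₂ ++ [a, b] = p ∨ σ₂ ++ [a, b] = q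
      · rw [hΦ] at heq
        simpa only [if_pos c₁, if_pos c₂] using heq
      · exfalso
        have hΦ₁ : Φ σ₁ = σ₁ := by rw [hΦ]; simp only [if_pos c₁]
        have : σ₁ ++ [a, b] = gMap p q (σ₂ ++ [a, b]) := by
          rw [← hkey σ₂ c₂, ← heq, hΦ₁]
        rcases c₁ with h | h
        · rw [h] at this
          exact c₂ (Or.inr (eq_q_of_gMap_eq_p hqp this.symm))
        · rw [h] at this
          rcases eq_p_or_q_of_gMap_eq_q hpq this.symm with h' | h'
          · exact c₂ (Or.inl h')
          · exact c₂ (Or.inr h')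
    · by_cases c₂ : σ₂ ++ [a, b] = p ∨ σ₂ ++ [a, b] = q
      · exfalso
        have hΦ₂ : Φ σ₂ = σ₂ := by rw [hΦ]; simp only [if_pos c₂]
        have : σ₂ ++ [a, b] = gMap p q (σ₁ ++ [a, b]) := by
          rw [← hkey σ₁ c₁, heq, hΦ₂]
        rcases c₂ with h | h
        · rw [h] at this
          exact c₁ (Or.inr (eq_q_of_gMap_eq_p hqp this.symm))
        · rw [h] at this
          rcases eq_p_or_q_of_gMap_eq_q hpq this.symm with h' | h'
          · exact c₁ (Or.inl h')
          · exact c₁ (Or.inr h')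
      · have hh := congrArg (· ++ [a, b]) heq
        rw [hkey σ₁ c₁, hkey σ₂ c₂] at hh
        exact snoc2_cancel (gMap_injective hlp hlq hpq hqp hh)




lemma key (S : BuchiStrategy G v0) {v : V} (hv : v ∈ G.V0)
    (ρ ρ' : List V) (w w' : V)
    (h1 : ρ ++ [v, w] ∈ S.tree) (h2 : ρ' ++ [v, w'] ∈ S.tree)
    (hww : w ≠ w') (hpq : ρ ++ [v] ≠ ρ' ++ [v])
    (hqp : ¬ (ρ' ++ [v]) <+: (ρ ++ [v])) :
    ∃ S' : BuchiStrategy G v0, S' ≠ S ∧ S'.Absorbs S := by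
  have hp : ρ ++ [v] ∈ S.tree :=
    S.prefix_closed _ w (by simp) (by rw [← snoc2]; exact h1)
  have hq : ρ' ++ [v] ∈ S.tree :=
    S.prefix_closed _ w' (by simp) (by rw [← snoc2]; exact h2)
  refine ⟨graft S (ρ ++ [v]) (ρ' ++ [v]) v hp hq (List.getLast?_concat)
    (List.getLast?_concat) hpq hqp, ?_, graft_absorbs S _ _ v hp hq _ _ hpq hqp⟩
  intro hSS
  have htree := congrArg BuchiStrategy.tree hSS
  have hmem : gMap (ρ ++ [v]) (ρ' ++ [v]) ((ρ ++ [v]) ++ [w']) ∈ S.tree := by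
    rw [gMap_snoc ?hh1 (fun _ => List.prefix_refl _), gMap_p]
    · rw [← snoc2]; exact h2
    case hh1 =>
      intro hc
      have := congrArg List.length hc
      simp at this
  have hmem2 : (ρ ++ [v]) ++ [w'] ∈ S.tree := by
    rw [← htree]
    exact hmem
  obtain ⟨y₀, hy₀, huniq⟩ := S.choice0 ρ v hp hv
  have e1 := huniq w h1
  have e2 := huniq w' (by show ρ ++ [v, w'] ∈ S.tree; rw [snoc2]; exact hmem2)
  exact hww (e1.trans e2.symm)

end BuchiAux

open BuchiStrategy in
/-- In a finite Büchi game, every strictly absorption-dominant strategy of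
Player 0 from `v0` is positional. -/
theorem strictly_absorption_dominant_positional {V : Type*} [Fintype V]
    {G : BuchiGame V} {v0 : V} (S : BuchiStrategy G v0)
    (hdom : ¬ ∃ S' : BuchiStrategy G v0, S' ≠ S ∧ S'.Absorbs S) :
    S.Positional := by
  intro v hv ρ ρ' w w' h1 h2
  by_contra hww
  by_cases hpq : ρ ++ [v] = ρ' ++ [v]
  · have hρ : ρ = ρ' := (BuchiAux.snoc_eq_iff.mp hpq).1
    subst hρ
    have hp : ρ ++ [v] ∈ S.tree :=
      S.prefix_closed _ w (by simp) (by rw [← BuchiAux.snoc2]; exact h1)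
    obtain ⟨y₀, hy₀, huniq⟩ := S.choice0 ρ v hp hv
    exact hww ((huniq w h1).trans (huniq w' h2).symm)
  · apply hdom
    by_cases hqp : (ρ' ++ [v]) <+: (ρ ++ [v])
    · exact BuchiAux.key S hv ρ' ρ w' w h2 h1 (Ne.symm hww) (Ne.symm hpq)
        (fun hc => hpq (hc.sublist.antisymm hqp.sublist))
    · exact BuchiAux.key S hv ρ ρ' w w' h1 h2 hww hpq hqp
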